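/- Let s ≥ 1 and m ≥ 0 be integers and let F : ℍ^s × 𝔻^m → ℂ be a holomorphic function satisfying F(τ + e_j, w) = F(τ, w) for all (τ,w) ∈ ℍ^s × 𝔻^m and all j ∈ {1,…,s}. Then there exists a holomorphic function G : (𝔻∖{0})^s × 𝔻^m → ℂ such that F(τ,w) = G(e^{2πiτ_1},…,e^{2πiτ_s}, w) for all (τ,w) ∈ ℍ^s × 𝔻^m. (This is the descent step used repeatedly in the proof of the local extension theorem: a function on the universal cover of the punctured polydisk which is invariant under the deck transformations τ_j ↦ τ_j + 1 is induced by a well-defined univalued holomorphic function on the punctured polydisk itself.) -/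

import Mathlib

open Complex Real

open Topology

noncomputable def cL (z : ℂ) : ℂ := Complex.log z / (2 * Real.pi * Complex.I)

lemma twoPiI_ne : (2 * (Real.pi:ℂ) * Complex.I) ≠ 0 := by
  simp [Real.pi_ne_zero, Complex.I_ne_zero]

lemma cL_exp {z : ℂ} (hz : z ≠ 0) : Complex.exp (2 * Real.pi * Complex.I * cL z) = z := by
  rw [cL, mul_div_cancel₀ _ twoPiI_ne, Complex.exp_log hz]

lemma cL_im_eq (z : ℂ) : (cL z).im = -(Complex.log z).re / (2 * Real.pi) := by
  rw [cL]
  rw [Complex.div_im]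
  simp [Complex.normSq_apply]
  field_simp

lemma cL_im {z : ℂ} (hz : z ≠ 0) (h1 : ‖z‖ < 1) : 0 < (cL z).im := by
  rw [cL_im_eq, Complex.log_re]
  have h0 : 0 < ‖z‖ := norm_pos_iff.mpr hz
  have hl := Real.log_neg h0 h1
  have hp := Real.pi_pos
  have : 0 < -Real.log ‖z‖ := by linarith
  positivity

lemma re_twoPiI (τ : ℂ) : (2 * Real.pi * Complex.I * τ).re = -(2 * Real.pi * τ.im) := by
  simp [Complex.mul_re, Complex.mul_im]

lemma abs_exp_twoPiI {τ : ℂ} (h : 0 < τ.im) :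
    ‖Complex.exp (2 * Real.pi * Complex.I * τ)‖ < 1 := by
  rw [Complex.norm_exp, re_twoPiI]
  rw [Real.exp_lt_one_iff]
  have := Real.pi_pos
  nlinarith

lemma cL_one : cL 1 = 0 := by simp [cL]

section
variable {s m : ℕ} {F : (Fin s → ℂ) × (Fin m → ℂ) → ℂ}

lemma im_single (τ : Fin s → ℂ) (j j' : Fin s) (c : ℝ) :
    (((τ + Pi.single j (c:ℂ) : Fin s → ℂ)) j').im = (τ j').im := by
  rcases eq_or_ne j' j with h | h <;> simp [Pi.single_apply, h]

lemma shiftZ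
    (heq : ∀ (τ : Fin s → ℂ) (w : Fin m → ℂ),
      (∀ j, 0 < (τ j).im) → (∀ k, ‖w k‖ < 1) →
      ∀ j : Fin s, F (τ + Pi.single j 1, w) = F (τ, w))
    (τ : Fin s → ℂ) (w : Fin m → ℂ)
    (hτ : ∀ j, 0 < (τ j).im) (hw : ∀ k, ‖w k‖ < 1)
    (j : Fin s) (n : ℤ) : F (τ + Pi.single j (n:ℂ), w) = F (τ, w) := by
  induction n using Int.induction_on with
  | zero => simp
  | succ n ih =>
      have hτ' : ∀ j', 0 < (((τ + Pi.single j ((n:ℝ):ℂ) : Fin s → ℂ)) j').im := by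
        intro j'; rw [im_single]; exact hτ j'
      have h1 : (τ : Fin s → ℂ) + Pi.single j (((n:ℤ)+1 : ℤ) : ℂ)
          = (τ + Pi.single j ((n:ℤ):ℂ)) + Pi.single j 1 := by
        rw [add_assoc, ← Pi.single_add]; norm_num
      rw [h1]
      have := heq (τ + Pi.single j ((n:ℤ):ℂ)) w (by exact_mod_cast hτ') hw j
      rw [this, ih]
  | pred n ih =>
      have hτ' : ∀ j', 0 < (((τ + Pi.single j ((-(n:ℝ)-1:ℝ):ℂ) : Fin s → ℂ)) j').im := by
        intro j'; rw [im_single]; exact hτ j'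
      have h1 : (τ : Fin s → ℂ) + Pi.single j (((-(n:ℤ) : ℤ) : ℂ))
          = (τ + Pi.single j ((-(n:ℤ)-1 : ℤ):ℂ)) + Pi.single j 1 := by
        rw [add_assoc, ← Pi.single_add]; norm_num
      have h2 := heq (τ + Pi.single j ((-(n:ℤ)-1 : ℤ):ℂ)) w (by exact_mod_cast hτ') hw j
      rw [← h1] at h2
      push_cast at h2 ih ⊢
      rw [← h2, ih]

end

section
variable {s m : ℕ} {F : (Fin s → ℂ) × (Fin m → ℂ) → ℂ}

lemma shift_all
    (heq : ∀ (τ : Fin s → ℂ) (w : Fin m → ℂ),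
      (∀ j, 0 < (τ j).im) → (∀ k, ‖w k‖ < 1) →
      ∀ j : Fin s, F (τ + Pi.single j 1, w) = F (τ, w))
    (τ : Fin s → ℂ) (w : Fin m → ℂ)
    (hτ : ∀ j, 0 < (τ j).im) (hw : ∀ k, ‖w k‖ < 1)
    (n : Fin s → ℤ) : F (τ + fun j => (n j : ℂ), w) = F (τ, w) := by
  classical
  have key : ∀ t : Finset (Fin s),
      F (τ + fun j => if j ∈ t then (n j : ℂ) else 0, w) = F (τ, w) := by
    intro t
    induction t using Finset.induction_on with
    | empty =>
        have h0 : (τ + fun j => if j ∈ (∅:Finset (Fin s)) then (n j:ℂ) else 0) = τ := by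
          funext j; simp
        rw [h0]
    | @insert a t ha ih =>
        have h1 : (τ + fun j => if j ∈ insert a t then (n j : ℂ) else 0)
            = (τ + fun j => if j ∈ t then (n j : ℂ) else 0) + Pi.single a ((n a : ℂ)) := by
          funext j'
          rcases eq_or_ne j' a with h | h
          · subst h; simp [ha]
          · simp [Pi.single_apply, h, Finset.mem_insert, h]
        have hτ' : ∀ j', 0 < ((τ + fun j => if j ∈ t then (n j : ℂ) else 0) j').im := by
          intro j'
          have : ((if j' ∈ t then (n j' : ℂ) else 0)).im = 0 := by split_ifs <;> simp
          simpa [this] using hτ j'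
        rw [h1, shiftZ heq _ w hτ' hw a (n a), ih]
  have := key Finset.univ
  simpa using this

lemma wd
    (heq : ∀ (τ : Fin s → ℂ) (w : Fin m → ℂ),
      (∀ j, 0 < (τ j).im) → (∀ k, ‖w k‖ < 1) →
      ∀ j : Fin s, F (τ + Pi.single j 1, w) = F (τ, w))
    (τ τ' : Fin s → ℂ) (w : Fin m → ℂ)
    (hτ : ∀ j, 0 < (τ j).im) (hτ' : ∀ j, 0 < (τ' j).im)
    (hw : ∀ k, ‖w k‖ < 1)
    (hexp : ∀ j, Complex.exp (2 * Real.pi * Complex.I * τ j)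
      = Complex.exp (2 * Real.pi * Complex.I * τ' j)) :
    F (τ, w) = F (τ', w) := by
  classical
  have hk : ∀ j, ∃ k : ℤ, τ' j = τ j + k := by
    intro j
    obtain ⟨k, hkeq⟩ := (Complex.exp_eq_exp_iff_exists_int).mp (hexp j)
    refine ⟨-k, ?_⟩
    have h2 : (2 * (Real.pi:ℂ) * Complex.I) * τ' j
        = (2 * (Real.pi:ℂ) * Complex.I) * (τ j + ((-k:ℤ):ℂ)) := by
      push_cast at hkeq ⊢; linear_combination -hkeq
    exact mul_left_cancel₀ twoPiI_ne h2
  choose n hn using hk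
  have hτ'' : τ' = τ + fun j => ((n j : ℤ) : ℂ) := by funext j; exact hn j
  rw [hτ'', shift_all heq τ w hτ hw n]
end



/-- Descent step: a holomorphic function on `ℍ^s × 𝔻^m` invariant under
the deck transformations `τ_j ↦ τ_j + 1` is induced by a holomorphic function on the
punctured polydisk `(𝔻∖{0})^s × 𝔻^m` via `(τ, w) ↦ (e^{2πiτ_1},…,e^{2πiτ_s}, w)`. -/
theorem descend_to_punctured_polydisk
    (s m : ℕ) (hs : 1 ≤ s)
    (F : (Fin s → ℂ) × (Fin m → ℂ) → ℂ)
    (hol : DifferentiableOn ℂ F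
      {p : (Fin s → ℂ) × (Fin m → ℂ) |
        (∀ j, 0 < (p.1 j).im) ∧ (∀ k, ‖p.2 k‖ < 1)})
    (heq : ∀ (τ : Fin s → ℂ) (w : Fin m → ℂ),
      (∀ j, 0 < (τ j).im) → (∀ k, ‖w k‖ < 1) →
      ∀ j : Fin s, F (τ + Pi.single j 1, w) = F (τ, w)) :
    ∃ G : (Fin s → ℂ) × (Fin m → ℂ) → ℂ,
      DifferentiableOn ℂ G
        {p : (Fin s → ℂ) × (Fin m → ℂ) |
          (∀ j, p.1 j ≠ 0 ∧ ‖p.1 j‖ < 1) ∧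
          (∀ k, ‖p.2 k‖ < 1)} ∧
      ∀ (τ : Fin s → ℂ) (w : Fin m → ℂ),
        (∀ j, 0 < (τ j).im) → (∀ k, ‖w k‖ < 1) →
        F (τ, w) = G (fun j => Complex.exp (2 * Real.pi * Complex.I * τ j), w) := by
  classical
  set Ω : Set ((Fin s → ℂ) × (Fin m → ℂ)) :=
    {p | (∀ j, 0 < (p.1 j).im) ∧ (∀ k, ‖p.2 k‖ < 1)} with hΩ
  set U : Set ((Fin s → ℂ) × (Fin m → ℂ)) :=
    {p | (∀ j, p.1 j ≠ 0 ∧ ‖p.1 j‖ < 1) ∧ (∀ k, ‖p.2 k‖ < 1)} with hU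
  refine ⟨fun p => F (fun j => cL (p.1 j), p.2), ?_, ?_⟩
  · -- differentiability
    intro p hp
    obtain ⟨hp1, hp2⟩ := hp
    have hIm0 : ∀ j, 0 < (cL (p.1 j)).im := fun j => cL_im (hp1 j).1 (hp1 j).2
    -- the good neighborhood
    set V : Set ((Fin s → ℂ) × (Fin m → ℂ)) :=
      ⋂ j, {q : (Fin s → ℂ) × (Fin m → ℂ) |
        q.1 j / p.1 j ∈ Complex.slitPlane ∧ 0 < (cL (p.1 j) + cL (q.1 j / p.1 j)).im} with hV
    have hVnhds : V ∈ 𝓝 p := by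
      rw [hV]
      refine Filter.iInter_mem.mpr fun j => ?_
      have hTopen : IsOpen {z : ℂ | z / p.1 j ∈ Complex.slitPlane} :=
        Complex.isOpen_slitPlane.preimage (continuous_id.div_const _)
      have hcont : ContinuousOn
          (fun z : ℂ => (cL (p.1 j) + cL (z / p.1 j)).im)
          {z : ℂ | z / p.1 j ∈ Complex.slitPlane} := by
        intro z hz
        have h1 : ContinuousAt Complex.log (z / p.1 j) := continuousAt_clog hz
        have hdiv : ContinuousAt (fun w : ℂ => w / p.1 j) z :=
          (continuous_id.div_const _).continuousAt
        have h2 : ContinuousAt (fun z : ℂ => cL (p.1 j) + cL (z / p.1 j)) z := by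
          refine continuousAt_const.add ?_
          have h3 := (ContinuousAt.comp (x := z) h1 hdiv).div_const (2*(Real.pi:ℂ)*Complex.I)
          simp only [cL]
          exact h3
        exact (Complex.continuous_im.continuousAt.comp h2).continuousWithinAt
      have hSopen : IsOpen {z : ℂ | z / p.1 j ∈ Complex.slitPlane ∧
          0 < (cL (p.1 j) + cL (z / p.1 j)).im} := by
        have := hcont.isOpen_inter_preimage hTopen (isOpen_Ioi (a := (0:ℝ)))
        convert this using 1
        rfl
      have hmain : IsOpen {q : (Fin s → ℂ) × (Fin m → ℂ) |
          q.1 j / p.1 j ∈ Complex.slitPlane ∧ 0 < (cL (p.1 j) + cL (q.1 j / p.1 j)).im} :=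
        hSopen.preimage (show Continuous fun q : (Fin s → ℂ) × (Fin m → ℂ) => q.1 j from
          (continuous_apply j).comp continuous_fst)
      refine hmain.mem_nhds ?_
      have hpp : p.1 j / p.1 j = 1 := div_self (hp1 j).1
      constructor
      · rw [hpp]; exact Complex.one_mem_slitPlane
      · rw [hpp, cL_one, add_zero]; exact hIm0 j
    -- local holomorphic representative
    set ψ : (Fin s → ℂ) × (Fin m → ℂ) → (Fin s → ℂ) × (Fin m → ℂ) :=
      fun q => (fun j => cL (p.1 j) + cL (q.1 j / p.1 j), q.2) with hψ
    have hψdiff : DifferentiableAt ℂ ψ p := by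
      refine DifferentiableAt.prodMk ?_ (differentiableAt_snd)
      rw [differentiableAt_pi]
      intro j
      refine (differentiableAt_const _).add ?_
      have heval : DifferentiableAt ℂ (fun q : (Fin s → ℂ) × (Fin m → ℂ) => q.1 j / p.1 j) p := by
        have h0 : DifferentiableAt ℂ (fun q : (Fin s → ℂ) × (Fin m → ℂ) => q.1 j) p :=
          ((ContinuousLinearMap.proj j).comp
            (ContinuousLinearMap.fst ℂ (Fin s → ℂ) (Fin m → ℂ))).differentiableAt
        have h1 : DifferentiableAt ℂ (fun z : ℂ => z / p.1 j) (p.1 j) :=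
          differentiableAt_id.div_const _
        exact h1.comp p h0
      have hlog : DifferentiableAt ℂ (fun z : ℂ => cL z) (p.1 j / p.1 j) := by
        simp only [cL]
        refine DifferentiableAt.div_const ?_ _
        refine Complex.differentiableAt_log ?_
        rw [div_self (hp1 j).1]; exact Complex.one_mem_slitPlane
      exact hlog.comp p heval
    have hψpΩ : ψ p ∈ Ω := by
      constructor
      · intro j
        simp only [hψ]
        rw [div_self (hp1 j).1, cL_one, add_zero]
        exact hIm0 j
      · exact hp2
    have hmaps : Set.MapsTo ψ (U ∩ V) Ω := by
      rintro q ⟨hqU, hqV⟩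
      constructor
      · intro j
        have := Set.mem_iInter.mp hqV j
        exact this.2
      · exact hqU.2
    have hH : DifferentiableWithinAt ℂ (F ∘ ψ) (U ∩ V) p :=
      (hol (ψ p) hψpΩ).comp p (hψdiff.differentiableWithinAt) hmaps
    have hGH : ∀ q ∈ U ∩ V, F (fun j => cL (q.1 j), q.2) = (F ∘ ψ) q := by
      rintro q ⟨hqU, hqV⟩
      refine wd heq _ _ q.2 ?_ ?_ hqU.2 ?_
      · exact fun j => cL_im (hqU.1 j).1 (hqU.1 j).2
      · intro j; exact (Set.mem_iInter.mp hqV j).2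
      · intro j
        have hq0 : q.1 j ≠ 0 := (hqU.1 j).1
        have hp0 : p.1 j ≠ 0 := (hp1 j).1
        rw [cL_exp hq0, mul_add, Complex.exp_add, cL_exp hp0,
          cL_exp (div_ne_zero hq0 hp0), mul_div_cancel₀ _ hp0]
    have hpUV : p ∈ U ∩ V := ⟨⟨hp1, hp2⟩, mem_of_mem_nhds hVnhds⟩
    have h1 : DifferentiableWithinAt ℂ (fun q : (Fin s → ℂ) × (Fin m → ℂ) =>
        F (fun j => cL (q.1 j), q.2)) (U ∩ V) p :=
      hH.congr hGH (hGH p hpUV)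
    exact (differentiableWithinAt_inter hVnhds).mp h1
  · -- functional equation
    intro τ w hτ hw
    refine wd heq τ _ w hτ ?_ hw ?_
    · intro j
      exact cL_im (Complex.exp_ne_zero _) (abs_exp_twoPiI (hτ j))
    · intro j
      rw [cL_exp (Complex.exp_ne_zero _)]
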